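/- Let 𝒜 be a nonempty set of infinite real matrices and ℬ the set of row-mixtures of 𝒜. Suppose x is a sequence in the domain of every A ∈ 𝒜 such that there exists η ∈ ℝ with lim_n B_n x = η for every B ∈ ℬ. Then lim_n A_n x = η uniformly in A ∈ 𝒜, i.e., for every ε > 0 there is N such that |A_n x − η| ≤ ε for all n ≥ N and all A ∈ 𝒜. -/

import Mathlib

open Filter

/-- The series `∑ k, a k` converges (partial sums) to `l`. -/
def SeriesConv (a : ℕ → ℝ) (l : ℝ) : Prop :=
  Tendsto (fun m => ∑ k ∈ Finset.range m, a k) atTop (nhds l)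

/-- `B` is a row-mixture of the family `𝒜`. -/
def RowMix (𝒜 : Set (ℕ → ℕ → ℝ)) (B : ℕ → ℕ → ℝ) : Prop :=
  ∀ n, ∃ A ∈ 𝒜, ∀ k, B n k = A n k

theorem stmt2 (𝒜 : Set (ℕ → ℕ → ℝ)) (h𝒜 : 𝒜.Nonempty)
    (x : ℕ → ℝ)
    (hdom : ∀ A ∈ 𝒜, ∀ n, ∃ l, SeriesConv (fun k => A n k * x k) l)
    (η : ℝ)
    (hall : ∀ B, RowMix 𝒜 B → ∀ T : ℕ → ℝ,
      (∀ n, SeriesConv (fun k => B n k * x k) (T n)) →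
      Tendsto T atTop (nhds η))
    (S : (ℕ → ℕ → ℝ) → ℕ → ℝ)
    (hS : ∀ A ∈ 𝒜, ∀ n, SeriesConv (fun k => A n k * x k) (S A n)) :
    ∀ ε > 0, ∃ N, ∀ n ≥ N, ∀ A ∈ 𝒜, |S A n - η| ≤ ε := by
  by_contra h
  push_neg at h
  obtain ⟨ε, hε, hbad⟩ := h
  obtain ⟨A₀, hA₀⟩ := h𝒜
  classical
  have choice : ∀ n, ∃ A, A ∈ 𝒜 ∧ ((∃ A' ∈ 𝒜, ε < |S A' n - η|) → ε < |S A n - η|) := by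
    intro n
    by_cases hc : ∃ A' ∈ 𝒜, ε < |S A' n - η|
    · obtain ⟨A', hA', h'⟩ := hc; exact ⟨A', hA', fun _ => h'⟩
    · exact ⟨A₀, hA₀, fun h' => absurd h' hc⟩
  choose Af hAf hAf2 using choice
  set B : ℕ → ℕ → ℝ := fun n k => Af n n k with hB
  have hmix : RowMix 𝒜 B := fun n => ⟨Af n, hAf n, fun k => rfl⟩
  set T : ℕ → ℝ := fun n => S (Af n) n with hT
  have hTc : ∀ n, SeriesConv (fun k => B n k * x k) (T n) := fun n => hS (Af n) (hAf n) n
  have htend := hall B hmix T hTc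
  obtain ⟨N, hN⟩ := Metric.tendsto_atTop.mp htend ε hε
  obtain ⟨n, hn, A, hA, hAbad⟩ := hbad N
  have h1 : ε < |T n - η| := hAf2 n ⟨A, hA, hAbad⟩
  have h2 : |T n - η| < ε := by
    have := hN n hn
    rwa [Real.dist_eq] at this
  linarith
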